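/- Let A ∈ ℂ^{n×n} be a Hermitian positive semidefinite matrix of rank k. Then there exists a unique matrix R ∈ ℂ^{k×n} in row echelon form with positive pivots such that A = R^* R. -/

import Mathlib

open Matrix
open scoped ComplexOrder

noncomputable section

/-- A matrix `R ∈ ℂ^{k×n}` is in row echelon form with positive pivots: there is a
strictly increasing pivot map `p` such that `R i (p i)` is real and positive and
`R i j = 0` for `j < p i`. -/
def RowEchelonPosPivots {k n : ℕ} (R : Matrix (Fin k) (Fin n) ℂ) : Prop :=
  ∃ p : Fin k → Fin n, StrictMono p ∧
    ∀ i : Fin k, (0 < (R i (p i)).re ∧ (R i (p i)).im = 0) ∧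
      ∀ j : Fin n, (j : ℕ) < (p i : ℕ) → R i j = 0

open Complex

lemma echelon_pivot_ne {k n : ℕ} {R : Matrix (Fin k) (Fin n) ℂ} {p : Fin k → Fin n}
    (h : ∀ i : Fin k, (0 < (R i (p i)).re ∧ (R i (p i)).im = 0) ∧
      ∀ j : Fin n, (j : ℕ) < (p i : ℕ) → R i j = 0) (i : Fin k) : R i (p i) ≠ 0 := by
  intro h0
  have := (h i).1.1
  rw [h0] at this
  simp at this

lemma echelon_rank {k n : ℕ} {R : Matrix (Fin k) (Fin n) ℂ}
    (h : RowEchelonPosPivots R) : R.rank = k := by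
  obtain ⟨p, hp, hpiv⟩ := h
  have hli : LinearIndependent ℂ R := by
    refine Fintype.linearIndependent_iff.mpr ?_
    intro c hc
    have step : ∀ i : Fin k, (∀ l : Fin k, l < i → c l = 0) → c i = 0 := by
      intro i ih
      have hcol := congrFun hc (p i)
      simp only [Finset.sum_apply, Pi.smul_apply, smul_eq_mul, Pi.zero_apply] at hcol
      rw [Finset.sum_eq_single i] at hcol
      · rcases mul_eq_zero.mp hcol with h1 | h1
        · exact h1
        · exact absurd h1 (echelon_pivot_ne hpiv i)
      · intro l _ hl
        rcases lt_or_gt_of_ne hl with hlt | hgt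
        · rw [ih l hlt, zero_mul]
        · rw [(hpiv l).2 (p i) (hp hgt), mul_zero]
      · intro hni; exact absurd (Finset.mem_univ i) hni
    have key : ∀ m : ℕ, ∀ i : Fin k, (i : ℕ) ≤ m → c i = 0 := by
      intro m
      induction m with
      | zero => intro i hi
                exact step i (fun l hl => absurd (Nat.lt_of_lt_of_le hl hi) (Nat.not_lt_zero _))
      | succ m ih => intro i hi
                     refine step i (fun l hl => ih l ?_)
                     have hl' : (l : ℕ) < (i : ℕ) := hl
                     omega
    exact fun i => key i i le_rfl
  have := LinearIndependent.rank_matrix (M := R) hli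
  simpa using this

lemma exists_echelon (m : ℕ) : ∀ (n : ℕ) (C : Matrix (Fin m) (Fin n) ℂ),
    ∃ (k : ℕ) (R : Matrix (Fin k) (Fin n) ℂ), RowEchelonPosPivots R ∧ Cᴴ * C = Rᴴ * R := by
  intro n
  induction n with
  | zero =>
    intro C
    refine ⟨0, 0, ⟨fun i => i.elim0, fun a => a.elim0, fun i => i.elim0⟩, ?_⟩
    ext i j
    exact i.elim0
  | succ n ih =>
    intro C
    by_cases h0 : ∀ l, C l 0 = 0
    · -- first column of C is zero
      obtain ⟨k, R', ⟨p', hp', hpiv'⟩, hG'⟩ := ih (fun i j => C i j.succ)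
      refine ⟨k, Matrix.of fun i j => Fin.cases 0 (fun j' => R' i j') j,
        ⟨fun i => (p' i).succ, fun a b hab => Fin.succ_lt_succ_iff.mpr (hp' hab), ?_⟩, ?_⟩
      · intro i
        refine ⟨by simpa using (hpiv' i).1, ?_⟩
        intro j hj
        induction j using Fin.cases with
        | zero => simp
        | succ j' =>
          simp only [Matrix.of_apply, Fin.cases_succ]
          exact (hpiv' i).2 j' (by simpa using hj)
      · ext i j
        simp only [mul_apply, conjTranspose_apply, Matrix.of_apply]
        induction i using Fin.cases with
        | zero => simp [h0]
        | succ i' =>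
          induction j using Fin.cases with
          | zero => simp [h0]
          | succ j' =>
            have := congrFun (congrFun hG' i') j'
            simp only [Fin.cases_succ]
            exact this
    · -- first column nonzero: Gram--Schmidt step
      push_neg at h0
      obtain ⟨l0, hl0⟩ := h0
      set ra : ℝ := ∑ l, Complex.normSq (C l 0) with hra_def
      have hra : 0 < ra := by
        refine Finset.sum_pos' (fun l _ => Complex.normSq_nonneg _) ⟨l0, Finset.mem_univ _, ?_⟩
        exact Complex.normSq_pos.mpr hl0
      set s : ℝ := Real.sqrt ra with hs_def
      have hs : 0 < s := Real.sqrt_pos.mpr hra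
      have hs2 : (s : ℂ) * (s : ℂ) = (ra : ℂ) := by
        rw [← Complex.ofReal_mul, Real.mul_self_sqrt hra.le]
      have hsne : (s : ℂ) ≠ 0 := Complex.ofReal_ne_zero.mpr hs.ne'
      have hrane : (ra : ℂ) ≠ 0 := Complex.ofReal_ne_zero.mpr hra.ne'
      set B : Fin (n+1) → ℂ := fun j => ∑ l, (starRingEnd ℂ) (C l 0) * C l j with hB_def
      have hB0 : B 0 = (ra : ℂ) := by
        simp only [hB_def, hra_def]
        push_cast
        refine Finset.sum_congr rfl (fun l _ => ?_)
        rw [← Complex.normSq_eq_conj_mul_self]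
      have hBconj : ∀ j, (∑ l, (starRingEnd ℂ) (C l j) * C l 0) = (starRingEnd ℂ) (B j) := by
        intro j
        rw [hB_def, map_sum]
        refine Finset.sum_congr rfl (fun l _ => ?_)
        rw [_root_.map_mul, Complex.conj_conj, mul_comm]
      set D : Matrix (Fin m) (Fin n) ℂ :=
        fun i j => C i j.succ - (B j.succ / ra) * C i 0 with hD_def
      obtain ⟨k, R', ⟨p', hp', hpiv'⟩, hG'⟩ := ih D
      refine ⟨k + 1,
        Matrix.of fun i => Fin.cases (fun j => B j / s)
          (fun i' j => Fin.cases 0 (fun j' => R' i' j') j) i,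
        ⟨Fin.cases 0 (fun i' => (p' i').succ), ?_, ?_⟩, ?_⟩
      · -- strict mono pivot map
        intro a b hab
        rcases Fin.eq_zero_or_eq_succ b with rfl | ⟨b', rfl⟩
        · exact absurd hab (Fin.not_lt_zero a)
        · rcases Fin.eq_zero_or_eq_succ a with rfl | ⟨a', rfl⟩
          · simpa using Fin.succ_pos (p' b')
          · have hab' : a' < b' := Fin.succ_lt_succ_iff.mp hab
            simpa using Fin.succ_lt_succ_iff.mpr (hp' hab')
      · -- pivot conditions
        intro i
        induction i using Fin.cases with
        | zero =>
          constructor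
          · have : (fun j => B j / s) (0 : Fin (n+1)) = ((ra / s : ℝ) : ℂ) := by
              show B 0 / (s : ℂ) = ((ra / s : ℝ) : ℂ)
              rw [hB0]; push_cast; ring
            simp only [Matrix.of_apply, Fin.cases_zero, this]
            constructor
            · simpa using div_pos hra hs
            · simp
          · intro j hj
            simp only [Matrix.of_apply, Fin.cases_zero, Fin.val_zero] at hj
            exact absurd hj (Nat.not_lt_zero _)
        | succ i' =>
          constructor
          · simpa using (hpiv' i').1
          · intro j hj
            induction j using Fin.cases with
            | zero => simp
            | succ j' =>
              simp only [Matrix.of_apply, Fin.cases_succ]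
              refine (hpiv' i').2 j' ?_
              simpa using hj
      · -- Gram identity
        ext i j
        simp only [mul_apply, conjTranspose_apply, Matrix.of_apply, Fin.sum_univ_succ, Fin.cases_zero,
          Fin.cases_succ, Complex.star_def]
        induction i using Fin.cases with
        | zero =>
          induction j using Fin.cases with
          | zero =>
            simp only [Fin.cases_zero, map_zero, zero_mul, mul_zero,
              Finset.sum_const_zero, add_zero, map_div₀, Complex.conj_ofReal]
            rw [show (∑ x, (starRingEnd ℂ) (C x 0) * C x 0) = ((ra : ℝ) : ℂ) from hB0]
            rw [show B 0 = ((ra : ℝ) : ℂ) from hB0, ← hs2]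
            field_simp
            rw [map_pow, Complex.conj_ofReal]
          | succ j' =>
            simp only [Fin.cases_zero, Fin.cases_succ, map_zero, zero_mul, mul_zero,
              Finset.sum_const_zero, add_zero, map_div₀, Complex.conj_ofReal]
            rw [show (∑ x, (starRingEnd ℂ) (C x 0) * C x j'.succ) = B j'.succ from rfl]
            rw [show B 0 = ((ra : ℝ) : ℂ) from hB0, ← hs2]
            field_simp
            rw [map_pow, Complex.conj_ofReal]
        | succ i' =>
          induction j using Fin.cases with
          | zero =>
            simp only [Fin.cases_zero, Fin.cases_succ, map_zero, zero_mul, mul_zero,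
              Finset.sum_const_zero, add_zero, map_div₀, Complex.conj_ofReal]
            rw [hBconj i'.succ]
            rw [show B 0 = ((ra : ℝ) : ℂ) from hB0, ← hs2]
            field_simp
          | succ j' =>
            simp only [Fin.cases_succ, map_div₀, Complex.conj_ofReal]
            have htail : (∑ l, (starRingEnd ℂ) (R' l i') * R' l j')
                = ∑ l, (starRingEnd ℂ) (D l i') * D l j' := by
              have := congrFun (congrFun hG' i') j'
              simpa [mul_apply, conjTranspose_apply] using this.symm
            rw [htail]
            have expand : ∀ l, (starRingEnd ℂ) (D l i') * D l j'
                = (starRingEnd ℂ) (C l i'.succ) * C l j'.succ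
                  - (B j'.succ / ra) * ((starRingEnd ℂ) (C l i'.succ) * C l 0)
                  - ((starRingEnd ℂ) (B i'.succ) / ra) * ((starRingEnd ℂ) (C l 0) * C l j'.succ)
                  + ((starRingEnd ℂ) (B i'.succ) / ra) * (B j'.succ / ra)
                      * ((starRingEnd ℂ) (C l 0) * C l 0) := by
              intro l
              simp only [hD_def, map_sub, _root_.map_mul, map_div₀, Complex.conj_ofReal]
              ring
            rw [Finset.sum_congr rfl (fun l _ => expand l)]
            simp only [Finset.sum_add_distrib, Finset.sum_sub_distrib, ← Finset.mul_sum]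
            rw [hBconj i'.succ]
            rw [show (∑ l, (starRingEnd ℂ) (C l 0) * C l 0) = ((ra : ℝ) : ℂ) from hB0]
            rw [show (∑ l, (starRingEnd ℂ) (C l 0) * C l j'.succ) = B j'.succ from rfl]
            rw [← hs2]
            field_simp
            ring

section aux
variable {k n : ℕ}

lemma row_pivot_eq {R : Matrix (Fin (k+1)) (Fin n) ℂ} {p : Fin (k+1) → Fin n}
    (hp : StrictMono p)
    (hpR : ∀ i, (0 < (R i (p i)).re ∧ (R i (p i)).im = 0) ∧
      ∀ j : Fin n, (j : ℕ) < (p i : ℕ) → R i j = 0) (j : Fin n) :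
    (Rᴴ * R) (p 0) j = (starRingEnd ℂ) (R 0 (p 0)) * R 0 j := by
  have hz : ∀ l : Fin k, R l.succ (p 0) = 0 :=
    fun l => (hpR l.succ).2 (p 0) (hp (Fin.succ_pos l))
  simp [mul_apply, conjTranspose_apply, Fin.sum_univ_succ, hz]

lemma col_lt_pivot_eq_zero {R : Matrix (Fin (k+1)) (Fin n) ℂ} {p : Fin (k+1) → Fin n}
    (hp : StrictMono p)
    (hpR : ∀ i, (0 < (R i (p i)).re ∧ (R i (p i)).im = 0) ∧
      ∀ j : Fin n, (j : ℕ) < (p i : ℕ) → R i j = 0)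
    {j : Fin n} (hj : (j : ℕ) < (p 0 : ℕ)) (j' : Fin n) :
    (Rᴴ * R) j j' = 0 := by
  have hz : ∀ l : Fin (k+1), R l j = 0 := by
    intro l
    refine (hpR l).2 j (lt_of_lt_of_le hj ?_)
    exact hp.monotone (Fin.zero_le l)
  simp [mul_apply, conjTranspose_apply, hz]

lemma diag_pivot_pos {R : Matrix (Fin (k+1)) (Fin n) ℂ} {p : Fin (k+1) → Fin n}
    (hp : StrictMono p)
    (hpR : ∀ i, (0 < (R i (p i)).re ∧ (R i (p i)).im = 0) ∧
      ∀ j : Fin n, (j : ℕ) < (p i : ℕ) → R i j = 0) :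
    0 < ((Rᴴ * R) (p 0) (p 0)).re := by
  rw [row_pivot_eq hp hpR]
  have h := (hpR 0).1
  rw [show (starRingEnd ℂ) (R 0 (p 0)) * R 0 (p 0)
      = ((normSq (R 0 (p 0)) : ℝ) : ℂ) from (normSq_eq_conj_mul_self).symm]
  rw [Complex.ofReal_re]
  refine normSq_pos.mpr ?_
  intro h0
  rw [h0] at h
  simp at h

end aux

lemma echelon_unique : ∀ (k : ℕ) {n : ℕ} (R S : Matrix (Fin k) (Fin n) ℂ),
    RowEchelonPosPivots R → RowEchelonPosPivots S → Rᴴ * R = Sᴴ * S → R = S := by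
  intro k
  induction k with
  | zero =>
    intro n R S _ _ _
    ext i j
    exact i.elim0
  | succ k ih =>
    intro n R S hR hS hG
    obtain ⟨p, hp, hpR⟩ := hR
    obtain ⟨q, hq, hpS⟩ := hS
    -- the first pivots coincide
    have hpq : p 0 = q 0 := by
      by_contra hne
      rcases lt_or_gt_of_ne hne with h | h
      · have h1 : (Sᴴ * S) (p 0) (p 0) = 0 := col_lt_pivot_eq_zero hq hpS h _
        have h2 := diag_pivot_pos hp hpR
        rw [hG, h1] at h2
        simp at h2
      · have h1 : (Rᴴ * R) (q 0) (q 0) = 0 := col_lt_pivot_eq_zero hp hpR h _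
        have h2 := diag_pivot_pos hq hpS
        rw [← hG, h1] at h2
        simp at h2
    -- the first pivot entries coincide
    have hdiag : (starRingEnd ℂ) (R 0 (p 0)) * R 0 (p 0)
        = (starRingEnd ℂ) (S 0 (p 0)) * S 0 (p 0) := by
      rw [← row_pivot_eq hp hpR (p 0), hG, hpq, row_pivot_eq hq hpS (q 0), ← hpq]
    have hns : normSq (R 0 (p 0)) = normSq (S 0 (p 0)) := by
      have := hdiag
      rw [← normSq_eq_conj_mul_self, ← normSq_eq_conj_mul_self] at this
      exact_mod_cast this
    have hre : (R 0 (p 0)).re = (S 0 (p 0)).re := by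
      have h1 := (hpR 0).1
      have h2 := (hpS 0).1
      rw [← hpq] at h2
      rw [normSq_apply, normSq_apply, h1.2, h2.2] at hns
      refine le_antisymm ?_ ?_ <;> nlinarith [h1.1, h2.1]
    have him : (S 0 (p 0)).im = 0 := by rw [hpq]; exact (hpS 0).1.2
    have hpiv_eq : R 0 (p 0) = S 0 (p 0) := Complex.ext hre (by rw [(hpR 0).1.2, him])
    have hRpne : (starRingEnd ℂ) (R 0 (p 0)) ≠ 0 := by
      simp only [ne_eq, map_eq_zero]
      intro h0
      have := (hpR 0).1.1
      rw [h0] at this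
      simp at this
    -- the first rows coincide
    have hrow0 : ∀ j, R 0 j = S 0 j := by
      intro j
      have h1 := row_pivot_eq hp hpR j
      have h2 := row_pivot_eq hq hpS j
      rw [← hpq] at h2
      rw [hG, h2, ← hpiv_eq] at h1
      exact (mul_left_cancel₀ hRpne h1.symm)
    -- the tails coincide
    set R' : Matrix (Fin k) (Fin n) ℂ := Matrix.of fun i j => R i.succ j with hR'def
    set S' : Matrix (Fin k) (Fin n) ℂ := Matrix.of fun i j => S i.succ j with hS'def
    have hG' : R'ᴴ * R' = S'ᴴ * S' := by
      ext i j
      have h := congrFun (congrFun hG i) j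
      simp only [mul_apply, conjTranspose_apply, Fin.sum_univ_succ] at h
      rw [hrow0 i, hrow0 j] at h
      have h' := add_left_cancel h
      simp only [mul_apply, conjTranspose_apply, hR'def, hS'def, Matrix.of_apply]
      exact h'
    have htails : R' = S' :=
      ih _ _ ⟨fun i => p i.succ, fun a b hab => hp (Fin.succ_lt_succ_iff.mpr hab),
          fun i => hpR i.succ⟩
        ⟨fun i => q i.succ, fun a b hab => hq (Fin.succ_lt_succ_iff.mpr hab),
          fun i => hpS i.succ⟩ hG'
    ext i j
    induction i using Fin.cases with
    | zero => exact hrow0 j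
    | succ i' => exact congrFun (congrFun htails i') j

/-- Every Hermitian positive semidefinite matrix `A ∈ ℂ^{n×n}` of rank
`k` has a unique factorization `A = R^* R` with `R ∈ ℂ^{k×n}` in row echelon form with
positive pivots. -/
theorem posSemidef_row_echelon_factorization
    (n k : ℕ) (A : Matrix (Fin n) (Fin n) ℂ)
    (hA : A.PosSemidef) (hrank : A.rank = k) :
    ∃! R : Matrix (Fin k) (Fin n) ℂ, RowEchelonPosPivots R ∧ A = Rᴴ * R := by
  open scoped MatrixOrder in obtain ⟨B, hB⟩ := CStarAlgebra.nonneg_iff_eq_star_mul_self.mp hA.nonneg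
  rw [star_eq_conjTranspose] at hB
  obtain ⟨k', R, hE, hGr⟩ := exists_echelon n n B
  have hAR : A = Rᴴ * R := by rw [hB, hGr]
  have hk : k' = k := by
    have h1 : A.rank = R.rank := by rw [hAR, Matrix.rank_conjTranspose_mul_self]
    have h2 := echelon_rank hE
    rw [hrank, h2] at h1
    omega
  subst hk
  refine ⟨R, ⟨hE, hAR⟩, ?_⟩
  rintro S ⟨hSE, hSA⟩
  exact echelon_unique _ S R hSE hE (by rw [← hSA, ← hAR])

end
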